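/- One has h ∈ 𝔰_0 and y ∈ 𝔰_1; if moreover the restriction of the Killing form of 𝔤 to 𝔰 is nondegenerate, then 𝔰_1 = K·y, 𝔰_i = 0 for all i ≥ 2, and K·y is a Lie ideal of the subalgebra 𝔰^{(0)} = 𝔰_0 + 𝔰_1. -/

import Mathlib

/-- `sAux 0 = 𝔰_{-1} = K·x`, `sAux (n+1) = 𝔰_n = {u ∈ 𝔤_n : ⁅x,u⁆ ∈ 𝔰_{n-1}}`. -/
noncomputable def sAux {K L : Type*} [Field K] [LieRing L] [LieAlgebra K L]
    (g : ℤ → Submodule K L) (x : L) : ℕ → Submodule K L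
  | 0 => Submodule.span K {x}
  | (n + 1) => g (n : ℤ) ⊓ (sAux g x n).comap (LieAlgebra.ad K L x)

/-- The subspaces `𝔰_i ⊆ 𝔤_i`. -/
noncomputable def sFun {K L : Type*} [Field K] [LieRing L] [LieAlgebra K L]
    (g : ℤ → Submodule K L) (x : L) (i : ℤ) : Submodule K L :=
  if i < -1 then ⊥ else sAux g x (i + 1).toNat

theorem stmt3 {K L : Type*} [Field K] [CharZero K] [LieRing L] [LieAlgebra K L]
    [FiniteDimensional K L] [LieAlgebra.IsSemisimple K L]
    (g : ℤ → Submodule K L)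
    (hdsum : DirectSum.IsInternal g)
    (hfin : {i : ℤ | g i ≠ ⊥}.Finite)
    (hbr : ∀ i j : ℤ, ∀ u ∈ g i, ∀ v ∈ g j, ⁅u, v⁆ ∈ g (i + j))
    -- the graded `sl₂`-triple `(x, h, y)`:
    (x h y : L) (hx : x ∈ g (-1)) (hh : h ∈ g 0) (hy : y ∈ g 1)
    (hhx : ⁅h, x⁆ = (-2 : K) • x) (hhy : ⁅h, y⁆ = (2 : K) • y) (hyx : ⁅y, x⁆ = h) :
    h ∈ sFun g x 0 ∧ y ∈ sFun g x 1 ∧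
    -- if moreover the restriction of the Killing form to `𝔰` is nondegenerate, then
    -- `𝔰_1 = K·y`, `𝔰_i = 0` for `i ≥ 2`, and `K·y` is an ideal of `𝔰⁽⁰⁾ = 𝔰₀ + 𝔰₁`:
    ((∀ u ∈ ⨆ i ≥ (-1 : ℤ), sFun g x i,
        (∀ v ∈ ⨆ i ≥ (-1 : ℤ), sFun g x i, killingForm K L u v = 0) → u = 0) →
      sFun g x 1 = Submodule.span K {y} ∧
      (∀ i : ℤ, 2 ≤ i → sFun g x i = ⊥) ∧
      (∀ u ∈ sFun g x 0 ⊔ sFun g x 1, ∀ v ∈ Submodule.span K {y},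
        ⁅u, v⁆ ∈ Submodule.span K {y})) := by
  -- `𝔰_{-1} = K·x`
  have hsm1 : sFun g x (-1) = Submodule.span K {x} := by
    simp [sFun, sAux]
  -- recursive description of `𝔰_n` for `n ≥ 0`
  have key : ∀ n : ℕ, sFun g x (n : ℤ) =
      g (n : ℤ) ⊓ (sFun g x ((n : ℤ) - 1)).comap (LieAlgebra.ad K L x) := by
    intro n
    have h1 : ¬ ((n : ℤ) < -1) := by omega
    have h2 : ¬ ((n : ℤ) - 1 < -1) := by omega
    have h3 : ((n : ℤ) + 1).toNat = n + 1 := by omega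
    have h4 : ((n : ℤ) - 1 + 1).toNat = n := by omega
    rw [sFun, sFun, if_neg h1, if_neg h2, h3, h4, sAux]
  -- membership characterization
  have memS : ∀ (n : ℕ) (u : L), u ∈ sFun g x (n : ℤ) ↔
      u ∈ g (n : ℤ) ∧ ⁅x, u⁆ ∈ sFun g x ((n : ℤ) - 1) := by
    intro n u
    rw [key n]
    simp [Submodule.mem_inf, Submodule.mem_comap, LieAlgebra.ad_apply]
  have mem0 : ∀ u : L, u ∈ sFun g x 0 ↔ u ∈ g 0 ∧ ⁅x, u⁆ ∈ Submodule.span K {x} := by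
    intro u
    have := memS 0 u
    norm_num at this
    rw [this]
    norm_num [hsm1]
  have mem1 : ∀ u : L, u ∈ sFun g x 1 ↔ u ∈ g 1 ∧ ⁅x, u⁆ ∈ sFun g x 0 := by
    intro u
    have := memS 1 u
    norm_num at this
    exact this
  -- `𝔰_i ≤ 𝔤_i`
  have sLe : ∀ i : ℤ, sFun g x i ≤ g i := by
    intro i
    rcases lt_trichotomy i (-1) with hi | hi | hi
    · simp [sFun, if_pos hi]
    · subst hi
      rw [hsm1, Submodule.span_le]
      simpa using hx
    · obtain ⟨n, rfl⟩ : ∃ n : ℕ, i = (n : ℤ) := ⟨i.toNat, by omega⟩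
      rw [key n]; exact inf_le_left
  -- `h ∈ 𝔰_0`
  have hh0 : h ∈ sFun g x 0 := by
    rw [mem0]
    refine ⟨hh, ?_⟩
    have : ⁅x, h⁆ = (2 : K) • x := by
      rw [← lie_skew, hhx]; simp
    rw [this]
    exact Submodule.smul_mem _ _ (Submodule.mem_span_singleton_self x)
  have hxy : ⁅x, y⁆ = -h := by rw [← lie_skew, hyx]
  -- `y ∈ 𝔰_1`
  have hy1 : y ∈ sFun g x 1 := by
    rw [mem1]
    exact ⟨hy, by rw [hxy]; exact neg_mem hh0⟩
  -- orthogonality of the grading w.r.t. the Killing form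
  have orth : ∀ i j : ℤ, i + j ≠ 0 → ∀ u ∈ g i, ∀ v ∈ g j, killingForm K L u v = 0 := by
    intro i j hij u hu v hv
    rw [killingForm_apply_apply]
    refine LinearMap.trace_eq_zero_of_mapsTo_ne hdsum (fun k => k + (i + j))
      (fun k hk => hij (by have hk2 : k + (i + j) = k := hk; omega)) ?_
    intro k w hw
    have h1 : ⁅v, w⁆ ∈ g (j + k) := hbr j k v hv w hw
    have h2 : ⁅u, ⁅v, w⁆⁆ ∈ g (i + (j + k)) := hbr _ _ u hu _ h1
    have heq : i + (j + k) = k + (i + j) := by ring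
    rw [heq] at h2
    simpa [LieAlgebra.ad_apply] using h2
  refine ⟨hh0, hy1, ?_⟩
  intro hnd
  -- members of `𝔰` lie in the big sup
  have hsup : ∀ j : ℤ, -1 ≤ j → sFun g x j ≤ ⨆ i ≥ (-1 : ℤ), sFun g x i := by
    intro j hj
    exact le_iSup₂ (f := fun i (_ : i ≥ (-1 : ℤ)) => sFun g x i) j hj
  -- vanishing lemma
  have vanish : ∀ i : ℤ, 1 ≤ i → ∀ u ∈ sFun g x i, killingForm K L u x = 0 → u = 0 := by
    intro i hi u hu hux
    refine hnd u (hsup i (by omega) hu) ?_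
    intro v hv
    have hker : (⨆ j ≥ (-1 : ℤ), sFun g x j) ≤ LinearMap.ker (killingForm K L u) := by
      refine iSup₂_le fun j hj => ?_
      rcases eq_or_lt_of_le hj with hj' | hj' 
      · rw [← hj', hsm1, Submodule.span_singleton_le_iff_mem]
        exact LinearMap.mem_ker.mpr hux
      · intro w hw
        exact LinearMap.mem_ker.mpr
          (orth i j (by omega) u (sLe i hu) w (sLe j hw))
    exact LinearMap.mem_ker.mp (hker hv)
  -- `𝔰_i = 0` for `i ≥ 2`
  have sbot : ∀ i : ℤ, 2 ≤ i → sFun g x i = ⊥ := by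
    intro i hi
    rw [eq_bot_iff]
    intro u hu
    have : u = 0 :=
      vanish i (by omega) u hu (orth i (-1) (by omega) u (sLe i hu) x hx)
    simp [this]
  -- `𝔰_1 = K·y`
  have hs1 : sFun g x 1 = Submodule.span K {y} := by
    by_cases hy0 : y = 0
    · have hhz : h = 0 := by rw [← hyx, hy0, zero_lie]
      have hxz : x = 0 := by
        have : (-2 : K) • x = 0 := by rw [← hhx, hhz, zero_lie]
        simpa [smul_eq_zero] using this
      have hbot : sFun g x 1 = ⊥ := by
        rw [eq_bot_iff]
        intro u hu
        have : u = 0 := vanish 1 le_rfl u hu (by rw [hxz]; simp)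
        simp [this]
      rw [hbot, hy0]
      simp
    · -- `κ(y, x) ≠ 0`
      have ha : killingForm K L y x ≠ 0 := by
        intro hz
        exact hy0 (vanish 1 le_rfl y hy1 hz)
      apply le_antisymm
      · intro u hu
        set c : K := killingForm K L u x / killingForm K L y x with hc
        have hmem : u - c • y ∈ sFun g x 1 :=
          Submodule.sub_mem _ hu (Submodule.smul_mem _ _ hy1)
        have hzero : killingForm K L (u - c • y) x = 0 := by
          have : killingForm K L (u - c • y) x =
              killingForm K L u x - c * killingForm K L y x := by
            simp [map_sub, LinearMap.sub_apply, LinearMap.smul_apply, smul_eq_mul]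
          rw [this, hc]
          field_simp
          ring
        have h' : u - c • y = 0 := vanish 1 le_rfl _ hmem hzero
        rw [sub_eq_zero.mp h']
        exact Submodule.smul_mem _ _ (Submodule.mem_span_singleton_self y)
      · rw [Submodule.span_singleton_le_iff_mem]
        exact hy1
  refine ⟨hs1, sbot, ?_⟩
  -- `𝔰_0` is a subalgebra
  have s0lie : ∀ u ∈ sFun g x 0, ∀ v ∈ sFun g x 0, ⁅u, v⁆ ∈ sFun g x 0 := by
    intro u hu v hv
    rw [mem0] at hu hv ⊢
    obtain ⟨hu1, hu2⟩ := hu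
    obtain ⟨hv1, hv2⟩ := hv
    refine ⟨by simpa using hbr 0 0 u hu1 v hv1, ?_⟩
    obtain ⟨a, ha⟩ := Submodule.mem_span_singleton.mp hu2
    obtain ⟨b, hb⟩ := Submodule.mem_span_singleton.mp hv2
    have : ⁅x, ⁅u, v⁆⁆ = ⁅⁅x, u⁆, v⁆ + ⁅u, ⁅x, v⁆⁆ := by
      rw [leibniz_lie]
    rw [this, ← ha, ← hb]
    rw [smul_lie, lie_smul, ← hb]
    rw [← lie_skew u x, ← ha]
    refine Submodule.add_mem _ (Submodule.smul_mem _ _ ?_) ?_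
    · exact Submodule.smul_mem _ _ (Submodule.mem_span_singleton_self x)
    · rw [smul_neg]
      exact Submodule.neg_mem _
        (Submodule.smul_mem _ _ (Submodule.smul_mem _ _
          (Submodule.mem_span_singleton_self x)))
  -- bracketing `𝔰_0` with `y` lands in `𝔰_1`
  have s0y : ∀ u ∈ sFun g x 0, ⁅u, y⁆ ∈ sFun g x 1 := by
    intro u hu
    rw [mem1]
    have hu' := (mem0 u).mp hu
    obtain ⟨hu1, hu2⟩ := hu'
    refine ⟨by simpa using hbr 0 1 u hu1 y hy, ?_⟩
    obtain ⟨a, ha⟩ := Submodule.mem_span_singleton.mp hu2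
    have : ⁅x, ⁅u, y⁆⁆ = ⁅⁅x, u⁆, y⁆ + ⁅u, ⁅x, y⁆⁆ := by rw [leibniz_lie]
    rw [this, ← ha, hxy, smul_lie, hxy, lie_neg]
    refine Submodule.add_mem _ (Submodule.smul_mem _ _ (neg_mem hh0)) ?_
    refine Submodule.neg_mem _ ?_
    exact s0lie u hu h hh0
  -- the ideal property
  intro u hu v hv
  obtain ⟨p, hp, q, hq, rfl⟩ := Submodule.mem_sup.mp hu
  obtain ⟨c, rfl⟩ := Submodule.mem_span_singleton.mp hv
  rw [hs1] at hq
  obtain ⟨d, rfl⟩ := Submodule.mem_span_singleton.mp hq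
  have : ⁅p + d • y, c • y⁆ = c • ⁅p, y⁆ + (c * d) • ⁅y, y⁆ := by
    rw [add_lie, lie_smul, lie_smul, smul_lie, smul_smul, mul_comm]
  rw [this, lie_self, smul_zero, add_zero]
  exact Submodule.smul_mem _ _ (hs1 ▸ s0y p hp)
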